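/- arXiv:2001.11419 — 5 statements merged into one kernel-verified Lean document; each statement's English description precedes it below -/
import Mathlib

section
/- For any A ∈ ℝ^{n₁×n₂×n₃}, the block-circulant matrix bcirc(A) is block-diagonalized by the DFT: (F_{n₃} ⊗ I_{n₁}) · bcirc(A) · (F_{n₃}^{-1} ⊗ I_{n₂}) is block-diagonal with n₃ diagonal blocks of size n₁×n₂, the i-th block being the i-th frontal slice of the tensor obtained by applying the DFT along the third mode of A. -/
open Matrix BigOperators
noncomputable section

/-- Unfold: stack frontal slices vertically. -/
def unfold {n2 l n3 : ℕ} (B : Fin n3 → Matrix (Fin n2) (Fin l) ℝ) :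
    Matrix (Fin n3 × Fin n2) (Fin l) ℝ := Matrix.of fun p c => B p.1 p.2 c

/-- Block-circulant matrix of the frontal slices. -/
def bcirc {n1 n2 n3 : ℕ} (A : Fin n3 → Matrix (Fin n1) (Fin n2) ℝ) :
    Matrix (Fin n3 × Fin n1) (Fin n3 × Fin n2) ℝ :=
  Matrix.of fun p q => A (p.1 - q.1) p.2 q.2

/-- t-product: fold (bcirc A * unfold B). -/
def tProd {n1 n2 l n3 : ℕ} (A : Fin n3 → Matrix (Fin n1) (Fin n2) ℝ)
    (B : Fin n3 → Matrix (Fin n2) (Fin l) ℝ) : Fin n3 → Matrix (Fin n1) (Fin l) ℝ :=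
  fun i => Matrix.of fun a c => (bcirc A * unfold B) (i, a) c

/-- The unnormalized DFT matrix, entries e^{-2πi jk/n}. -/
def dftM (n : ℕ) : Matrix (Fin n) (Fin n) ℂ :=
  Matrix.of fun j k =>
    Complex.exp (-2 * (Real.pi : ℂ) * Complex.I * (((j : ℕ) : ℂ) * ((k : ℕ) : ℂ)) / (n : ℂ))

/-- DFT along the third mode (applied to each tube). -/
def fourier3 {n1 n2 n3 : ℕ} (A : Fin n3 → Matrix (Fin n1) (Fin n2) ℝ) :
    Fin n3 → Matrix (Fin n1) (Fin n2) ℂ :=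
  fun i => Matrix.of fun a b => ∑ k, dftM n3 i k * ((A k a b : ℝ) : ℂ)

/-- Tensor conjugate transpose: transpose each frontal slice and reverse slices 2..n₃. -/
def ctrans {n1 n2 n3 : ℕ} (X : Fin n3 → Matrix (Fin n1) (Fin n2) ℝ) :
    Fin n3 → Matrix (Fin n2) (Fin n1) ℝ := fun i => (X (-i))ᵀ

/-- Identity tensor: first frontal slice identity, rest zero. -/
def idT (n n3 : ℕ) : Fin n3 → Matrix (Fin n) (Fin n) ℝ :=
  fun i => if (i : ℕ) = 0 then 1 else 0


def zetaC (n : ℕ) : ℂ := Complex.exp (-(2 * Real.pi * Complex.I) / n)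

lemma zetaC_ne_zero (n : ℕ) : zetaC n ≠ 0 := Complex.exp_ne_zero _

lemma zetaC_pow_n {n : ℕ} (hn : 0 < n) : zetaC n ^ n = 1 := by
  rw [zetaC, ← Complex.exp_nat_mul]
  have hn' : (n : ℂ) ≠ 0 := Nat.cast_ne_zero.mpr hn.ne'
  rw [show (n : ℂ) * (-(2 * Real.pi * Complex.I) / n) = -(2 * Real.pi * Complex.I) by
    field_simp]
  rw [Complex.exp_neg, Complex.exp_two_pi_mul_I, inv_one]

lemma zetaC_zpow_n {n : ℕ} (hn : 0 < n) : zetaC n ^ (n : ℤ) = 1 := by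
  rw [zpow_natCast]; exact zetaC_pow_n hn

lemma zetaC_zpow_congr {n : ℕ} (hn : 0 < n) {a b : ℤ} (h : (n : ℤ) ∣ (a - b)) :
    zetaC n ^ a = zetaC n ^ b := by
  obtain ⟨t, ht⟩ := h
  have ha : a = b + n * t := by linarith
  subst ha
  rw [zpow_add₀ (zetaC_ne_zero n), _root_.zpow_mul, zetaC_zpow_n hn, _root_.one_zpow, mul_one]

lemma zetaC_prim {n : ℕ} (hn : 0 < n) {d : ℤ} (h : zetaC n ^ d = 1) : (n : ℤ) ∣ d := by
  rw [zetaC, ← Complex.exp_int_mul, Complex.exp_eq_one_iff] at h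
  obtain ⟨k, hk⟩ := h
  have hn' : (n : ℂ) ≠ 0 := Nat.cast_ne_zero.mpr hn.ne'
  have h2 : (2 * (Real.pi : ℂ) * Complex.I) ≠ 0 := by
    simp [Real.pi_ne_zero, Complex.I_ne_zero]
  field_simp at hk
  have h3 : ((-d : ℤ) : ℂ) = ((k * n : ℤ) : ℂ) := by
    apply mul_right_cancel₀ h2
    push_cast
    linear_combination (2 * (Real.pi : ℂ) * Complex.I) * hk
  have h4 : -d = k * n := by exact_mod_cast h3
  exact ⟨-k, by linarith⟩

lemma orth {n : ℕ} (hn : 0 < n) (d : ℤ) :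
    ∑ l : Fin n, zetaC n ^ (d * (l : ℤ)) = if (n : ℤ) ∣ d then (n : ℂ) else 0 := by
  split_ifs with h
  · have hone : ∀ l : Fin n, zetaC n ^ (d * (l : ℤ)) = 1 := by
      intro l
      have : (n : ℤ) ∣ d * (l : ℤ) - 0 := by
        simpa using Dvd.dvd.mul_right h (l : ℤ)
      rw [zetaC_zpow_congr hn this, zpow_zero]
    simp [hone, Finset.card_univ]
  · set χ : ℂ := zetaC n ^ d with hχ
    have hχ1 : χ ≠ 1 := fun hc => h (zetaC_prim hn hc)
    have hχn : χ ^ n = 1 := by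
      rw [hχ, ← zpow_natCast, ← _root_.zpow_mul, mul_comm, _root_.zpow_mul,
        zetaC_zpow_n hn, _root_.one_zpow]
    have hterm : ∀ l : Fin n, zetaC n ^ (d * (l : ℤ)) = χ ^ (l : ℕ) := by
      intro l
      rw [hχ, ← zpow_natCast (zetaC n ^ d) (l : ℕ), ← _root_.zpow_mul]
    rw [Finset.sum_congr rfl (fun l _ => hterm l), Fin.sum_univ_eq_sum_range,
      geom_sum_eq hχ1, hχn]
    simp


lemma dftM_eq (n : ℕ) (i k : Fin n) :
    dftM n i k = zetaC n ^ ((i : ℤ) * (k : ℤ)) := by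
  rw [dftM, Matrix.of_apply, zetaC]
  rw [show ((i : ℤ) * (k : ℤ)) = (((i : ℕ) * (k : ℕ) : ℕ) : ℤ) by push_cast; ring]
  rw [zpow_natCast, ← Complex.exp_nat_mul]
  congr 1
  push_cast
  ring

def invF (n : ℕ) : Matrix (Fin n) (Fin n) ℂ :=
  Matrix.of fun j k => (n : ℂ)⁻¹ * zetaC n ^ (-((j : ℤ) * (k : ℤ)))

lemma fin_dvd_iff {n : ℕ} (i j : Fin n) :
    (n : ℤ) ∣ ((i : ℤ) - (j : ℤ)) ↔ i = j := by
  constructor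
  · rintro ⟨t, ht⟩
    have hiz : (i : ℤ) < n := by exact_mod_cast i.isLt
    have hjz : (j : ℤ) < n := by exact_mod_cast j.isLt
    have h0i : (0 : ℤ) ≤ i := Int.natCast_nonneg _
    have h0j : (0 : ℤ) ≤ j := Int.natCast_nonneg _
    have hnn : (0 : ℤ) < n := by omega
    have ht0 : t = 0 := by
      by_contra hne
      rcases lt_or_gt_of_ne hne with hlt | hgt
      · have h1 : t ≤ -1 := by omega
        nlinarith
      · have h1 : 1 ≤ t := by omega
        nlinarith
    subst ht0
    simp only [mul_zero] at ht
    have : (i : ℤ) = j := by linarith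
    exact Fin.ext (by exact_mod_cast this)
  · rintro rfl; simp

lemma dftM_mul_invF {n : ℕ} (hn : 0 < n) : dftM n * invF n = 1 := by
  ext i j
  rw [Matrix.mul_apply, Matrix.one_apply]
  have hterm : ∀ k : Fin n, dftM n i k * invF n k j
      = (n : ℂ)⁻¹ * zetaC n ^ (((i : ℤ) - (j : ℤ)) * (k : ℤ)) := by
    intro k
    rw [dftM_eq, invF, Matrix.of_apply,
      show ((i:ℤ) - (j:ℤ)) * (k:ℤ) = (i:ℤ)*(k:ℤ) + (-((k:ℤ)*(j:ℤ))) by ring,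
      zpow_add₀ (zetaC_ne_zero n)]
    ring
  rw [Finset.sum_congr rfl (fun k _ => hterm k), ← Finset.mul_sum, orth hn]
  have hn' : (n : ℂ) ≠ 0 := Nat.cast_ne_zero.mpr hn.ne'
  by_cases h : i = j
  · subst h; simp [hn']
  · have hnd : ¬ (n:ℤ) ∣ (i:ℤ) - (j:ℤ) := fun hd => h ((fin_dvd_iff i j).mp hd)
    simp [h, hnd]

lemma dftM_transpose (n : ℕ) : (dftM n)ᵀ = dftM n := by
  ext i j
  rw [Matrix.transpose_apply, dftM, Matrix.of_apply, Matrix.of_apply]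
  ring_nf

lemma invF_transpose (n : ℕ) : (invF n)ᵀ = invF n := by
  ext i j
  rw [Matrix.transpose_apply, invF, Matrix.of_apply, Matrix.of_apply]
  ring_nf

lemma invF_mul_dftM {n : ℕ} (hn : 0 < n) : invF n * dftM n = 1 := by
  have h := congrArg Matrix.transpose (dftM_mul_invF hn)
  rwa [Matrix.transpose_mul, invF_transpose, dftM_transpose, Matrix.transpose_one] at h

lemma dftM_inv {n : ℕ} (hn : 0 < n) : (dftM n)⁻¹ = invF n :=
  Matrix.inv_eq_right_inv (dftM_mul_invF hn)

lemma dftM_add {n : ℕ} (hn : 0 < n) (i m l : Fin n) :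
    dftM n i (m + l) = dftM n i m * dftM n i l := by
  rw [dftM_eq, dftM_eq, dftM_eq, ← zpow_add₀ (zetaC_ne_zero n)]
  apply zetaC_zpow_congr hn
  have hdvd : (n : ℤ) ∣ (((m + l : Fin n) : ℤ) - ((m : ℤ) + (l : ℤ))) := by
    have h1 : ((m + l : Fin n) : ℕ) = ((m : ℕ) + (l : ℕ)) % n := Fin.val_add m l
    rw [h1]
    push_cast
    have h2 : (n : ℤ) ∣ ((m : ℤ) + (l : ℤ)) - ((m : ℤ) + (l : ℤ)) % n :=
      Int.dvd_self_sub_of_emod_eq rfl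
    simpa [neg_sub] using dvd_neg.mpr h2
  have h3 := Dvd.dvd.mul_left hdvd (i : ℤ)
  have h4 : (i : ℤ) * ((m + l : Fin n) : ℤ) - ((i : ℤ) * (m : ℤ) + (i : ℤ) * (l : ℤ))
      = (i : ℤ) * (((m + l : Fin n) : ℤ) - ((m : ℤ) + (l : ℤ))) := by ring
  rw [h4]
  exact h3



open Kronecker in
lemma key (n1 n2 n3 : ℕ) (hn : 0 < n3) (A : Fin n3 → Matrix (Fin n1) (Fin n2) ℝ) :
    (dftM n3 ⊗ₖ (1 : Matrix (Fin n1) (Fin n1) ℂ)) * (bcirc A).map ((↑) : ℝ → ℂ)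
      = (Matrix.of fun p q => if p.1 = q.1 then fourier3 A p.1 p.2 q.2 else 0 :
          Matrix (Fin n3 × Fin n1) (Fin n3 × Fin n2) ℂ) *
        (dftM n3 ⊗ₖ (1 : Matrix (Fin n2) (Fin n2) ℂ)) := by
  haveI : NeZero n3 := ⟨hn.ne'⟩
  ext ⟨i, a⟩ ⟨l, b⟩
  simp only [Matrix.mul_apply, Fintype.sum_prod_type, Matrix.kroneckerMap_apply,
    Matrix.map_apply, Matrix.of_apply, Matrix.one_apply, bcirc, mul_ite, mul_one,
    mul_zero, ite_mul, zero_mul, Finset.sum_ite_eq, Finset.sum_ite_eq',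
    Finset.mem_univ, if_true]
  rw [fourier3, Matrix.of_apply, Finset.sum_mul,
    ← Equiv.sum_comp (Equiv.addRight l) (fun x => dftM n3 i x * ((A (x - l) a b : ℝ) : ℂ))]
  apply Finset.sum_congr rfl
  intro m _
  simp only [Equiv.coe_addRight]
  rw [add_sub_cancel_right, dftM_add hn]
  ring

open Kronecker in
/-- (F ⊗ I) bcirc(A) (F⁻¹ ⊗ I) is block diagonal with blocks the
frontal slices of the mode-3 DFT of A. -/
theorem bcirc_block_diagonalized (n1 n2 n3 : ℕ)
    (A : Fin n3 → Matrix (Fin n1) (Fin n2) ℝ) :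
    (dftM n3 ⊗ₖ (1 : Matrix (Fin n1) (Fin n1) ℂ)) *
        (bcirc A).map ((↑) : ℝ → ℂ) *
        ((dftM n3)⁻¹ ⊗ₖ (1 : Matrix (Fin n2) (Fin n2) ℂ)) =
      Matrix.of fun p q => if p.1 = q.1 then fourier3 A p.1 p.2 q.2 else 0 := by
  rcases Nat.eq_zero_or_pos n3 with h0 | hn
  · subst h0
    ext ⟨p1, _⟩ q
    exact p1.elim0
  · rw [key n1 n2 n3 hn A, Matrix.mul_assoc, dftM_inv hn, ← Matrix.mul_kronecker_mul,
      dftM_mul_invF hn, Matrix.one_mul, Matrix.one_kronecker_one, Matrix.mul_one]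
end
end

section
/- The t-product is associative: for tensors A ∈ ℝ^{n₁×n₂×n₃}, B ∈ ℝ^{n₂×n₄×n₃}, C ∈ ℝ^{n₄×n₅×n₃}, we have (A * B) * C = A * (B * C). -/
open Matrix BigOperators
noncomputable section

/-- the t-product is associative. -/
theorem tProd_assoc (n1 n2 n3 n4 n5 : ℕ)
    (A : Fin n3 → Matrix (Fin n1) (Fin n2) ℝ)
    (B : Fin n3 → Matrix (Fin n2) (Fin n4) ℝ)
    (C : Fin n3 → Matrix (Fin n4) (Fin n5) ℝ) :
    tProd (tProd A B) C = tProd A (tProd B C) := by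
  funext i
  ext a e
  haveI : NeZero n3 := ⟨i.pos.ne'⟩
  simp only [tProd, bcirc, unfold, Matrix.mul_apply, Matrix.of_apply,
    Fintype.sum_prod_type, Finset.sum_mul, Finset.mul_sum]
  calc ∑ j : Fin n3, ∑ x : Fin n4, ∑ k : Fin n3, ∑ b : Fin n2,
        A (i - j - k) a b * B k b x * C j x e
      = ∑ j : Fin n3, ∑ x : Fin n4, ∑ p : Fin n3, ∑ b : Fin n2,
        A (i - p) a b * (B (p - j) b x * C j x e) := by
        refine Finset.sum_congr rfl fun j _ => Finset.sum_congr rfl fun x _ => ?_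
        rw [← Equiv.sum_comp (Equiv.addRight j)
          (fun p => ∑ b : Fin n2, A (i - p) a b * (B (p - j) b x * C j x e))]
        refine Finset.sum_congr rfl fun k _ => Finset.sum_congr rfl fun b _ => ?_
        simp only [Equiv.coe_addRight]
        rw [show i - (k + j) = i - j - k by rw [sub_add_eq_sub_sub, sub_right_comm], add_sub_cancel_right]
        ring
    _ = ∑ j : Fin n3, ∑ p : Fin n3, ∑ x : Fin n4, ∑ b : Fin n2,
        A (i - p) a b * (B (p - j) b x * C j x e) := by
        exact Finset.sum_congr rfl fun j _ => Finset.sum_comm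
    _ = ∑ p : Fin n3, ∑ j : Fin n3, ∑ x : Fin n4, ∑ b : Fin n2,
        A (i - p) a b * (B (p - j) b x * C j x e) := Finset.sum_comm
    _ = ∑ p : Fin n3, ∑ j : Fin n3, ∑ b : Fin n2, ∑ x : Fin n4,
        A (i - p) a b * (B (p - j) b x * C j x e) := by
        exact Finset.sum_congr rfl fun p _ => Finset.sum_congr rfl
          fun j _ => Finset.sum_comm
    _ = ∑ p : Fin n3, ∑ b : Fin n2, ∑ j : Fin n3, ∑ x : Fin n4,
        A (i - p) a b * (B (p - j) b x * C j x e) := by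
        exact Finset.sum_congr rfl fun p _ => Finset.sum_comm
end
end

section
/- For tensors A ∈ ℝ^{n₁×n₂×n₃} and B ∈ ℝ^{n₂×l×n₃}, (A * B)^* = B^* * A^*, where the tensor conjugate transpose X^* is obtained by transposing each frontal slice of X and reversing the order of frontal slices 2 through n₃. -/
open Matrix BigOperators
noncomputable section

/-- (A * B)^* = B^* * A^*. -/
theorem tProd_ctrans (n1 n2 l n3 : ℕ)
    (A : Fin n3 → Matrix (Fin n1) (Fin n2) ℝ)
    (B : Fin n3 → Matrix (Fin n2) (Fin l) ℝ) :
    ctrans (tProd A B) = tProd (ctrans B) (ctrans A) := by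
  cases n3 with
  | zero => funext i; exact i.elim0
  | succ m =>
    funext i
    ext c a
    simp only [ctrans, tProd, Matrix.mul_apply, bcirc, unfold, Matrix.of_apply,
      Matrix.transpose_apply]
    rw [Fintype.sum_prod_type, Fintype.sum_prod_type]
    simp only [neg_sub]
    rw [← Equiv.sum_comp (Equiv.addLeft i) (fun j => ∑ b, B (j - i) b c * A (-j) a b)]
    refine Finset.sum_congr rfl fun j _ => Finset.sum_congr rfl fun b _ => ?_
    simp only [Equiv.coe_addLeft, add_sub_cancel_left, neg_add_rev]
    rw [mul_comm, sub_eq_add_neg, add_comm]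
end
end

section
/- (Existence of the t-SVD) Every A ∈ ℝ^{n₁×n₂×n₃} admits a factorization A = U * S * V^*, where U ∈ ℝ^{n₁×n₁×n₃} and V ∈ ℝ^{n₂×n₂×n₃} are orthogonal tensors (U^* * U = I and V^* * V = I) and S ∈ ℝ^{n₁×n₂×n₃} is f-diagonal (each frontal slice of S is a diagonal matrix). -/
open Matrix BigOperators
noncomputable section

/-- The basic character `m ↦ e^{-2πi m/n}`. -/
def cE (n : ℕ) (m : ℤ) : ℂ := Complex.exp (-2 * (Real.pi : ℂ) * Complex.I / n * m)

lemma cE_add (n : ℕ) (a b : ℤ) : cE n (a + b) = cE n a * cE n b := by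
  rw [cE, cE, cE, ← Complex.exp_add]
  congr 1
  push_cast
  ring

lemma cE_zero (n : ℕ) : cE n 0 = 1 := by simp [cE]

lemma cE_int_mul (n : ℕ) (t : ℤ) : cE n (n * t) = 1 := by
  rcases Nat.eq_zero_or_pos n with h | h
  · simp [h, cE]
  · rw [cE]
    have hn : (n : ℂ) ≠ 0 := by exact_mod_cast h.ne'
    have harg : -2 * (Real.pi : ℂ) * Complex.I / n * ((n : ℤ) * t : ℤ)
        = (-t : ℤ) * (2 * Real.pi * Complex.I) := by
      push_cast
      field_simp
    rw [harg, Complex.exp_int_mul_two_pi_mul_I]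

lemma cE_congr (n : ℕ) {a b : ℤ} (h : (n : ℤ) ∣ a - b) : cE n a = cE n b := by
  obtain ⟨t, ht⟩ := h
  have : a = b + n * t := by linarith
  rw [this, cE_add, cE_int_mul, mul_one]

lemma cE_pow (n : ℕ) (a : ℤ) (k : ℕ) : cE n (a * k) = cE n a ^ k := by
  rw [cE, cE, ← Complex.exp_nat_mul]
  congr 1
  push_cast
  ring

lemma cE_star (n : ℕ) (a : ℤ) : (starRingEnd ℂ) (cE n a) = cE n (-a) := by
  rw [cE, cE, ← Complex.exp_conj]
  congr 1
  have h2 : (starRingEnd ℂ) (-2 * (Real.pi : ℂ) * Complex.I / n * a)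
      = -(-2 * (Real.pi : ℂ) * Complex.I / n) * a := by
    simp only [_root_.map_mul, map_div₀, map_neg, Complex.conj_I]
    rw [show (starRingEnd ℂ) 2 = 2 from map_ofNat _ 2,
      show (starRingEnd ℂ) ((Real.pi : ℂ)) = (Real.pi : ℂ) from Complex.conj_ofReal _,
      show (starRingEnd ℂ) ((n : ℂ)) = (n : ℂ) from map_natCast _ _,
      show (starRingEnd ℂ) ((a : ℂ)) = (a : ℂ) from map_intCast _ _]
    ring
  rw [h2]
  push_cast
  ring

lemma cE_ne_one (n : ℕ) (hn : 0 < n) {m : ℤ} (h : ¬ (n : ℤ) ∣ m) : cE n m ≠ 1 := by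
  intro hc
  rw [cE, Complex.exp_eq_one_iff] at hc
  obtain ⟨t, ht⟩ := hc
  have hn' : (n : ℂ) ≠ 0 := by exact_mod_cast hn.ne'
  have hpi : (Real.pi : ℂ) ≠ 0 := by exact_mod_cast Real.pi_ne_zero
  have hI := Complex.I_ne_zero
  apply h
  refine ⟨-t, ?_⟩
  have : (m : ℂ) = n * (-t : ℤ) := by
    push_cast
    field_simp at ht
    have h2 : (-2 : ℂ) * Real.pi * Complex.I * m = t * (2 * Real.pi * Complex.I) * n := by
      linear_combination (2 * (Real.pi : ℂ) * Complex.I) * ht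
    have h3 : (m : ℂ) = -t * n := by
      apply mul_left_cancel₀ (a := (-2 : ℂ) * Real.pi * Complex.I)
      · intro hc2
        simp [hpi, Complex.I_ne_zero] at hc2
      · linear_combination h2
    rw [h3]; ring
  exact_mod_cast this

lemma cE_geom_sum (n : ℕ) (m : ℤ) :
    (∑ k : Fin n, cE n (m * (k : ℕ))) = if (n : ℤ) ∣ m then (n : ℂ) else 0 := by
  rcases Nat.eq_zero_or_pos n with h0 | hn
  · subst h0
    simp only [Finset.univ_eq_empty, Finset.sum_empty]
    by_cases h : (0 : ℤ) ∣ m <;> simp [h]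
  by_cases h : (n : ℤ) ∣ m
  · rw [if_pos h]
    have h1 : ∀ k : Fin n, cE n (m * (k : ℕ)) = 1 := by
      intro k
      rw [show cE n (m * (k:ℕ)) = cE n 0 from cE_congr n (by simpa using Dvd.dvd.mul_right h (k:ℕ)), cE_zero]
    rw [Finset.sum_congr rfl (fun k _ => h1 k)]
    simp
  · rw [if_neg h]
    have h2 : ∀ k : Fin n, cE n (m * (k : ℕ)) = cE n m ^ (k : ℕ) := fun k => cE_pow n m k
    rw [Finset.sum_congr rfl (fun k _ => h2 k), Fin.sum_univ_eq_sum_range]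
    have hne : cE n m ≠ 1 := cE_ne_one n hn h
    rw [geom_sum_eq hne]
    have hpow : cE n m ^ n = 1 := by
      rw [← cE_pow, mul_comm]
      exact cE_congr n (by simpa using Dvd.dvd.mul_right (dvd_refl (n:ℤ)) m) |>.trans (cE_zero n)
    rw [hpow, sub_self, zero_div]

lemma dftM_eq_cE (n : ℕ) (i k : Fin n) : dftM n i k = cE n ((i : ℕ) * (k : ℕ)) := by
  rw [dftM, cE]
  simp only [Matrix.of_apply]
  congr 1
  push_cast
  ring

lemma natmod_dvd (n a : ℕ) : (n : ℤ) ∣ ((a % n : ℕ) : ℤ) - a := by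
  have h : ((a % n : ℕ) : ℤ) = (a : ℤ) % (n : ℤ) := by push_cast; rfl
  rw [h, Int.emod_def]
  exact ⟨-((a : ℤ) / (n : ℤ)), by ring⟩

lemma fin_add_dvd {n : ℕ} (x y : Fin n) :
    (n : ℤ) ∣ (((x + y : Fin n) : ℕ) : ℤ) - ((x : ℕ) + (y : ℕ)) := by
  rw [Fin.val_add]
  exact_mod_cast natmod_dvd n ((x : ℕ) + (y : ℕ))

lemma fin_neg_dvd {n : ℕ} (x : Fin n) :
    (n : ℤ) ∣ (((-x : Fin n) : ℕ) : ℤ) + (x : ℕ) := by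
  rcases Nat.eq_zero_or_pos n with h | h
  · exact absurd x.isLt (by omega)
  have hx : ((-x : Fin n) : ℕ) = (n - (x : ℕ)) % n := by
    rw [Fin.neg_def]
  rw [hx]
  obtain ⟨t, ht⟩ := natmod_dvd n (n - (x : ℕ))
  refine ⟨t + 1, ?_⟩
  have hxle : (x : ℕ) ≤ n := le_of_lt x.isLt
  zify [hxle] at ht ⊢
  linarith

lemma fin_sub_dvd {n : ℕ} [NeZero n] (x y : Fin n) :
    (n : ℤ) ∣ (((x - y : Fin n) : ℕ) : ℤ) - ((x : ℕ) - (y : ℕ)) := by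
  have h1 : x - y = x + (-y) := sub_eq_add_neg x y
  rw [h1]
  obtain ⟨t, ht⟩ := fin_add_dvd x (-y)
  obtain ⟨u, hu⟩ := fin_neg_dvd y
  exact ⟨t + u, by push_cast at ht hu ⊢; linarith⟩

lemma fin_eq_of_dvd {n : ℕ} [NeZero n] (x y : Fin n)
    (h : (n : ℤ) ∣ ((x : ℕ) : ℤ) - ((y : ℕ) : ℤ)) : x = y := by
  obtain ⟨t, ht⟩ := h
  have h1 : (x : ℕ) < n := x.isLt
  have h2 : (y : ℕ) < n := y.isLt
  have hn : (0 : ℤ) < (n : ℤ) := by exact_mod_cast Nat.pos_of_ne_zero (NeZero.ne n)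
  rcases lt_trichotomy t 0 with h3 | h3 | h3
  · have h4 : (n : ℤ) * t ≤ -(n : ℤ) := by nlinarith
    exact absurd ht (by omega)
  · subst h3
    rw [mul_zero] at ht
    exact Fin.ext (by omega)
  · have h4 : (n : ℤ) ≤ (n : ℤ) * t := by nlinarith
    exact absurd ht (by omega)

section Fourier
variable {n1 n2 l n3 : ℕ} [NeZero n3]

lemma fourier3_apply (A : Fin n3 → Matrix (Fin n1) (Fin n2) ℝ) (i : Fin n3) (a : Fin n1)
    (b : Fin n2) : fourier3 A i a b = ∑ k : Fin n3, cE n3 ((i : ℕ) * (k : ℕ)) * ((A k a b : ℝ) : ℂ) := by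
  rw [fourier3]
  simp only [Matrix.of_apply]
  exact Finset.sum_congr rfl fun k _ => by rw [dftM_eq_cE]

lemma fourier3_neg (X : Fin n3 → Matrix (Fin n1) (Fin n2) ℝ) (i : Fin n3) :
    fourier3 X (-i) = (fourier3 X i).map (starRingEnd ℂ) := by
  ext a b
  rw [Matrix.map_apply, fourier3_apply, fourier3_apply, map_sum]
  refine Finset.sum_congr rfl fun k _ => ?_
  rw [_root_.map_mul, cE_star, Complex.conj_ofReal]
  congr 1
  apply cE_congr
  obtain ⟨t, ht⟩ := fin_neg_dvd i
  exact ⟨t * (k : ℕ), by push_cast at ht ⊢; nlinarith [ht]⟩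

lemma fourier3_ctrans (X : Fin n3 → Matrix (Fin n1) (Fin n2) ℝ) (i : Fin n3) :
    fourier3 (ctrans X) i = (fourier3 X i)ᴴ := by
  ext b a
  rw [Matrix.conjTranspose_apply, fourier3_apply, fourier3_apply, star_sum]
  rw [show (∑ k : Fin n3, cE n3 ((i : ℕ) * (k : ℕ)) * ((ctrans X k b a : ℝ) : ℂ))
      = ∑ k : Fin n3, cE n3 ((i : ℕ) * (((-k : Fin n3) : ℕ))) * ((X k a b : ℝ) : ℂ) from
    Fintype.sum_equiv (Equiv.neg (Fin n3)) _ _ (fun k => by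
      simp only [Equiv.neg_apply, ctrans, Matrix.transpose_apply, neg_neg])]
  refine Finset.sum_congr rfl fun k _ => ?_
  rw [star_mul', show (star (((X k a b : ℝ) : ℂ))) = ((X k a b : ℝ) : ℂ) from by
    rw [Complex.star_def, Complex.conj_ofReal],
    show star (cE n3 ((i : ℕ) * (k : ℕ))) = cE n3 (-((i : ℕ) * (k : ℕ))) from by
    rw [Complex.star_def, cE_star]]
  congr 1
  apply cE_congr
  obtain ⟨t, ht⟩ := fin_neg_dvd k
  exact ⟨(i : ℕ) * t, by push_cast at ht ⊢; nlinarith [ht]⟩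

lemma fourier3_idT (n : ℕ) (i : Fin n3) : fourier3 (idT n n3) i = 1 := by
  ext a b
  rw [fourier3_apply]
  rw [Finset.sum_eq_single (0 : Fin n3)]
  · simp only [idT, Fin.val_zero, if_pos rfl, mul_zero, Nat.cast_zero, cE_zero, one_mul]
    by_cases h : a = b <;> simp [Matrix.one_apply, h]
  · intro k _ hk
    have : (k : ℕ) ≠ 0 := fun hc => hk (Fin.ext (by simp [hc]))
    simp [idT, this]
  · intro h
    exact absurd (Finset.mem_univ _) h

lemma cE_fin_mul_add (i : ℕ) (x y : Fin n3) :
    cE n3 (i * (((x + y : Fin n3) : ℕ) : ℤ)) = cE n3 (i * (x : ℕ)) * cE n3 (i * (y : ℕ)) := by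
  rw [← cE_add]
  apply cE_congr
  obtain ⟨t, ht⟩ := fin_add_dvd x y
  exact ⟨i * t, by push_cast at ht ⊢; linear_combination (i : ℤ) * ht⟩

lemma fourier3_tProd (A : Fin n3 → Matrix (Fin n1) (Fin n2) ℝ)
    (B : Fin n3 → Matrix (Fin n2) (Fin l) ℝ) (i : Fin n3) :
    fourier3 (tProd A B) i = fourier3 A i * fourier3 B i := by
  ext a c
  rw [Matrix.mul_apply, fourier3_apply]
  have hterm : ∀ j : Fin n3, cE n3 ((i : ℕ) * (j : ℕ)) * ((tProd A B j a c : ℝ) : ℂ)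
      = ∑ p : Fin n3 × Fin n2, cE n3 ((i : ℕ) * (j : ℕ)) *
          (((A (j - p.1) a p.2 : ℝ) : ℂ) * ((B p.1 p.2 c : ℝ) : ℂ)) := by
    intro j
    rw [show ((tProd A B j a c : ℝ) : ℂ)
        = ∑ p : Fin n3 × Fin n2, (((A (j - p.1) a p.2 : ℝ) : ℂ) * ((B p.1 p.2 c : ℝ) : ℂ)) from by
      rw [tProd]
      simp only [Matrix.of_apply, Matrix.mul_apply, bcirc, unfold]
      push_cast
      rfl]
    rw [Finset.mul_sum]
  rw [Finset.sum_congr rfl (fun j _ => hterm j), Finset.sum_comm]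
  have hinner : ∀ p : Fin n3 × Fin n2,
      (∑ j : Fin n3, cE n3 ((i : ℕ) * (j : ℕ)) *
          (((A (j - p.1) a p.2 : ℝ) : ℂ) * ((B p.1 p.2 c : ℝ) : ℂ)))
      = (∑ x : Fin n3, cE n3 ((i : ℕ) * (x : ℕ)) * ((A x a p.2 : ℝ) : ℂ)) *
        (cE n3 ((i : ℕ) * ((p.1 : Fin n3) : ℕ)) * ((B p.1 p.2 c : ℝ) : ℂ)) := by
    intro p
    rw [Finset.sum_mul]
    refine (Fintype.sum_equiv (Equiv.addRight p.1) _ _ fun x => ?_).symm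
    simp only [Equiv.coe_addRight]
    rw [add_sub_cancel_right, cE_fin_mul_add (i : ℕ) x p.1]
    ring
  rw [Finset.sum_congr rfl (fun p _ => hinner p), Fintype.sum_prod_type, Finset.sum_comm]
  refine Finset.sum_congr rfl fun b _ => ?_
  rw [fourier3_apply A i a b, fourier3_apply B i b c, Finset.mul_sum]

lemma fourier3_injective (X Y : Fin n3 → Matrix (Fin n1) (Fin n2) ℝ)
    (h : ∀ i, fourier3 X i = fourier3 Y i) : X = Y := by
  have key : ∀ (Z : Fin n3 → Matrix (Fin n1) (Fin n2) ℝ) (j : Fin n3) (a : Fin n1) (b : Fin n2),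
      (∑ i : Fin n3, cE n3 (-((i : ℕ) * (j : ℕ))) * fourier3 Z i a b)
        = (n3 : ℂ) * ((Z j a b : ℝ) : ℂ) := by
    intro Z j a b
    have hswap : ∀ i : Fin n3, cE n3 (-((i : ℕ) * (j : ℕ))) * fourier3 Z i a b
        = ∑ k : Fin n3, cE n3 (((k : ℕ) - (j : ℕ)) * (i : ℕ)) * ((Z k a b : ℝ) : ℂ) := by
      intro i
      rw [fourier3_apply, Finset.mul_sum]
      refine Finset.sum_congr rfl fun k _ => ?_
      rw [← mul_assoc, ← cE_add]
      congr 2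
      push_cast
      ring
    rw [Finset.sum_congr rfl (fun i _ => hswap i), Finset.sum_comm]
    have hgeom : ∀ k : Fin n3,
        (∑ i : Fin n3, cE n3 (((k : ℕ) - (j : ℕ)) * (i : ℕ)) * ((Z k a b : ℝ) : ℂ))
        = (if k = j then (n3 : ℂ) else 0) * ((Z k a b : ℝ) : ℂ) := by
      intro k
      rw [← Finset.sum_mul, cE_geom_sum]
      congr 1
      by_cases hkj : k = j
      · rw [if_pos hkj, if_pos (by subst hkj; simp)]
      · rw [if_neg hkj, if_neg ?_]
        intro hdvd
        exact hkj (fin_eq_of_dvd k j hdvd)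
    rw [Finset.sum_congr rfl (fun k _ => hgeom k), Finset.sum_eq_single j]
    · rw [if_pos rfl]
    · intro k _ hk
      rw [if_neg hk, zero_mul]
    · intro hj
      exact absurd (Finset.mem_univ _) hj
  funext j
  ext a b
  have h1 := key X j a b
  have h2 := key Y j a b
  rw [Finset.sum_congr rfl (fun i _ => by rw [h i])] at h1
  rw [h2] at h1
  have hn3 : (n3 : ℂ) ≠ 0 := by
    exact_mod_cast (NeZero.ne n3)
  have := mul_left_cancel₀ hn3 h1.symm
  exact_mod_cast this

lemma exists_real_inv (Wc : Fin n3 → Matrix (Fin n1) (Fin n2) ℂ)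
    (hs : ∀ i, Wc (-i) = (Wc i).map (starRingEnd ℂ)) :
    ∃ W : Fin n3 → Matrix (Fin n1) (Fin n2) ℝ, (∀ i, fourier3 W i = Wc i) ∧
      (∀ (k : Fin n3) (a : Fin n1) (b : Fin n2), (∀ j, Wc j a b = 0) → W k a b = 0) := by
  set c : Fin n3 → Fin n1 → Fin n2 → ℂ := fun k a b =>
    (n3 : ℂ)⁻¹ * ∑ j : Fin n3, cE n3 (-((j : ℕ) * (k : ℕ))) * Wc j a b with hc
  have hreal : ∀ k a b, (starRingEnd ℂ) (c k a b) = c k a b := by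
    intro k a b
    rw [hc]
    simp only [_root_.map_mul, map_sum, map_inv₀, map_natCast]
    congr 1
    refine Fintype.sum_equiv (Equiv.neg (Fin n3)) _ _ fun x => ?_
    simp only [Equiv.neg_apply]
    have hWc : (starRingEnd ℂ) (Wc x a b) = Wc (-x) a b := by
      have h5 := congrFun (congrFun (hs x) a) b
      rw [Matrix.map_apply] at h5
      rw [h5]
    rw [hWc]
    congr 1
    rw [cE_star, neg_neg]
    apply cE_congr
    obtain ⟨t, ht⟩ := fin_neg_dvd x
    exact ⟨t * (k : ℕ), by push_cast at ht ⊢; linear_combination ((k:ℕ) : ℤ) * ht⟩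
  refine ⟨fun k => Matrix.of fun a b => (c k a b).re, ?_, ?_⟩
  · intro i
    ext a b
    have hcoe : ∀ k a b, (((c k a b).re : ℝ) : ℂ) = c k a b := by
      intro k a b
      exact Complex.conj_eq_iff_re.mp (hreal k a b)
    rw [fourier3_apply]
    simp only [Matrix.of_apply]
    rw [Finset.sum_congr rfl (fun k _ => by rw [hcoe k a b])]
    rw [Finset.sum_congr rfl (fun k _ => by rw [hc])]
    have hexp : ∀ k : Fin n3, cE n3 ((i : ℕ) * (k : ℕ)) *
        ((n3 : ℂ)⁻¹ * ∑ j : Fin n3, cE n3 (-((j : ℕ) * (k : ℕ))) * Wc j a b)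
        = (n3 : ℂ)⁻¹ * ∑ j : Fin n3, cE n3 ((((i : ℕ) : ℤ) - (j : ℕ)) * (k : ℕ)) * Wc j a b := by
      intro k
      rw [← mul_assoc, mul_comm (cE n3 ((i : ℕ) * (k : ℕ))) ((n3:ℂ)⁻¹), mul_assoc]
      congr 1
      rw [Finset.mul_sum]
      refine Finset.sum_congr rfl fun j _ => ?_
      rw [← mul_assoc, ← cE_add]
      congr 2
      push_cast
      ring
    rw [Finset.sum_congr rfl (fun k _ => hexp k), ← Finset.mul_sum, Finset.sum_comm]
    have hgeom : ∀ j : Fin n3,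
        (∑ k : Fin n3, cE n3 ((((i : ℕ) : ℤ) - (j : ℕ)) * (k : ℕ)) * Wc j a b)
        = (if (n3 : ℤ) ∣ (((i : ℕ) : ℤ) - (j : ℕ)) then (n3 : ℂ) else 0) * Wc j a b := by
      intro j
      rw [← Finset.sum_mul, cE_geom_sum]
    rw [Finset.sum_congr rfl (fun j _ => hgeom j), Finset.sum_eq_single i]
    · rw [if_pos (by simp), ← mul_assoc, inv_mul_cancel₀ (by exact_mod_cast (NeZero.ne n3)), one_mul]
    · intro j _ hj
      rw [if_neg ?_, zero_mul]
      intro hdvd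
      exact hj (fin_eq_of_dvd j i (by obtain ⟨t, ht⟩ := hdvd; exact ⟨-t, by linarith⟩))
    · intro hi
      exact absurd (Finset.mem_univ _) hi
  · intro k a b hz
    simp only [Matrix.of_apply, hc]
    rw [Finset.sum_congr rfl (fun j _ => by rw [hz j, mul_zero])]
    simp

end Fourier

lemma svd_exists {𝕜 : Type*} [RCLike 𝕜] (m n : ℕ) (M : Matrix (Fin m) (Fin n) 𝕜) :
    ∃ (P : Matrix (Fin m) (Fin m) 𝕜) (D : Matrix (Fin m) (Fin n) 𝕜)
      (Q : Matrix (Fin n) (Fin n) 𝕜),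
      Pᴴ * P = 1 ∧ Qᴴ * Q = 1 ∧ (∀ (a : Fin m) (b : Fin n), (a : ℕ) ≠ (b : ℕ) → D a b = 0) ∧
      M = P * D * Qᴴ := by
  classical
  have hH : (Mᴴ * M).IsHermitian := isHermitian_conjTranspose_mul_self M
  set W : Matrix (Fin n) (Fin n) 𝕜 := (hH.eigenvectorUnitary : Matrix (Fin n) (Fin n) 𝕜) with hW
  have hWu : Wᴴ * W = 1 := by
    simpa [star_eq_conjTranspose] using (Matrix.mem_unitaryGroup_iff').mp hH.eigenvectorUnitary.2
  have hspec : Mᴴ * M = W * Matrix.diagonal (RCLike.ofReal ∘ hH.eigenvalues) * Wᴴ := by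
    simpa [star_eq_conjTranspose] using hH.spectral_theorem
  set lam0 : Fin n → ℝ := hH.eigenvalues with hlam0
  have hlam0nn : ∀ j, 0 ≤ lam0 j := Matrix.eigenvalues_conjTranspose_mul_self_nonneg M
  set key : Fin n → ℕ := fun j => if lam0 j = 0 then 1 else 0 with hkey
  set π : Equiv.Perm (Fin n) := Tuple.sort key with hπ
  have hmono : Monotone (key ∘ π) := Tuple.monotone_sort key
  set lam : Fin n → ℝ := fun j => lam0 (π j) with hlam
  have hlamnn : ∀ j, 0 ≤ lam j := fun j => hlam0nn _
  have hlower : ∀ j k : Fin n, j ≤ k → lam k ≠ 0 → lam j ≠ 0 := by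
    intro j k hjk hk
    have h2 := hmono hjk
    simp only [hkey, Function.comp_apply] at h2
    by_contra h
    rw [hlam] at h hk
    rw [if_pos h, if_neg hk] at h2
    omega
  set Q : Matrix (Fin n) (Fin n) 𝕜 := W.submatrix id π with hQ
  have hmulsub : ∀ X : Matrix (Fin n) (Fin n) 𝕜,
      Wᴴ.submatrix ⇑π id * (X * W.submatrix id ⇑π) = (Wᴴ * X * W).submatrix ⇑π ⇑π := by
    intro X
    have h2 : X * W.submatrix id ⇑π = (X * W).submatrix id ⇑π := by
      have := Matrix.submatrix_mul_equiv X W id (Equiv.refl (Fin n)) ⇑π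
      simpa using this
    rw [h2]
    have h3 := Matrix.submatrix_mul_equiv Wᴴ (X * W) ⇑π (Equiv.refl (Fin n)) ⇑π
    simp only [Equiv.coe_refl] at h3
    rw [h3, Matrix.mul_assoc]
  have hQu : Qᴴ * Q = 1 := by
    have := hmulsub 1
    rw [Matrix.one_mul, Matrix.mul_one] at this
    rw [hQ, conjTranspose_submatrix, this, hWu]
    ext i j
    simp [Matrix.one_apply, Matrix.submatrix, EmbeddingLike.apply_eq_iff_eq]
  have hQu' : Q * Qᴴ = 1 := mul_eq_one_comm.mp hQu
  set N : Matrix (Fin m) (Fin n) 𝕜 := M * Q with hN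
  have hNN : Nᴴ * N = Matrix.diagonal (fun j => (RCLike.ofReal (lam j) : 𝕜)) := by
    have h1 : Nᴴ * N = Qᴴ * ((Mᴴ * M) * Q) := by
      rw [hN, conjTranspose_mul]; simp only [Matrix.mul_assoc]
    have hins : Wᴴ * (W * Matrix.diagonal (RCLike.ofReal ∘ hH.eigenvalues) * Wᴴ) * W
        = Matrix.diagonal (RCLike.ofReal ∘ hH.eigenvalues) := by
      rw [Matrix.mul_assoc Wᴴ _ W, Matrix.mul_assoc _ Wᴴ W, hWu, Matrix.mul_one,
        ← Matrix.mul_assoc, hWu, Matrix.one_mul]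
    rw [h1, hspec, hQ, conjTranspose_submatrix, hmulsub, hins]
    ext i j
    by_cases h : i = j
    · subst h; simp [Matrix.diagonal, Matrix.submatrix, hlam, hlam0]
    · simp [Matrix.diagonal, Matrix.submatrix, h, (Equiv.injective π).ne h]
  -- column inner products
  have hcol : ∀ j k : Fin n, (∑ a, star (N a j) * N a k)
      = if j = k then (RCLike.ofReal (lam j) : 𝕜) else 0 := by
    intro j k
    have h := congrFun (congrFun (congrArg (fun X => X) hNN) j) k
    simpa [Matrix.mul_apply, Matrix.conjTranspose_apply, Matrix.diagonal_apply] using h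
  have hcolzero : ∀ j : Fin n, lam j = 0 → ∀ a, N a j = 0 := by
    intro j hj a
    have h := hcol j j
    rw [if_pos rfl, hj] at h
    have h2 : ∀ a, star (N a j) * N a j = (RCLike.ofReal (‖N a j‖ ^ 2) : 𝕜) := by
      intro a; rw [RCLike.star_def, RCLike.conj_mul]; norm_cast
    rw [Finset.sum_congr rfl (fun a _ => h2 a)] at h
    have h3 : (∑ a, ‖N a j‖ ^ 2) = 0 := by
      exact_mod_cast h
    have h4 : ‖N a j‖ ^ 2 = 0 := by
      have hnn : ∀ a ∈ Finset.univ, (0:ℝ) ≤ ‖N a j‖ ^ 2 := fun a _ => sq_nonneg _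
      exact (Finset.sum_eq_zero_iff_of_nonneg hnn).mp h3 a (Finset.mem_univ a)
    simpa using pow_eq_zero_iff (n := 2) (by norm_num) |>.mp h4
  -- columns as Euclidean vectors
  set col : Fin n → EuclideanSpace 𝕜 (Fin m) := fun j => WithLp.toLp 2 (fun a => N a j) with hcolv
  have hcolinner : ∀ j k : Fin n, (inner 𝕜 (col j) (col k) : 𝕜)
      = if j = k then (RCLike.ofReal (lam j) : 𝕜) else 0 := by
    intro j k
    rw [← hcol j k, PiLp.inner_apply]
    simp [hcolv, RCLike.inner_apply, mul_comm]
  set p : Fin n → EuclideanSpace 𝕜 (Fin m) :=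
    fun j => ((RCLike.ofReal (Real.sqrt (lam j))⁻¹ : 𝕜)) • col j with hp
  have hpinner : ∀ j k : Fin n, lam j ≠ 0 → lam k ≠ 0 →
      (inner 𝕜 (p j) (p k) : 𝕜) = if j = k then 1 else 0 := by
    intro j k hj hk
    rw [hp]
    simp only [inner_smul_left, inner_smul_right, RCLike.conj_ofReal, hcolinner]
    by_cases h : j = k
    · subst h
      rw [if_pos rfl, if_pos rfl]
      have hsq : Real.sqrt (lam j) * Real.sqrt (lam j) = lam j := Real.mul_self_sqrt (hlamnn j)
      have hs0 : Real.sqrt (lam j) ≠ 0 := by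
        intro h0
        exact hj (by rw [← hsq, h0, mul_zero])
      field_simp
      rw [← RCLike.ofReal_pow, ← RCLike.ofReal_mul, div_pow, one_pow, Real.sq_sqrt (hlamnn j),
        one_div_mul_cancel hj, RCLike.ofReal_one]
    · rw [if_neg h, if_neg h, mul_zero, mul_zero]
  -- number of nonzero lam's is at most m
  have hcard : ∀ j : Fin n, lam j ≠ 0 → (j : ℕ) < m := by
    intro j hj
    set s : Finset (Fin n) := Finset.univ.filter (fun j => lam j ≠ 0) with hs
    have hson : Orthonormal 𝕜 (fun x : {x // x ∈ s} => p x) := by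
      rw [orthonormal_iff_ite]
      rintro ⟨x, hx⟩ ⟨y, hy⟩
      rw [hs, Finset.mem_filter] at hx hy
      rw [hpinner x y hx.2 hy.2]
      by_cases h : x = y
      · subst h; simp
      · rw [if_neg h, if_neg (fun hc => h (congrArg Subtype.val hc))]
    have hle : s.card ≤ m := by
      have h1 := hson.linearIndependent.fintype_card_le_finrank
      rwa [Fintype.card_coe, finrank_euclideanSpace_fin] at h1
    have hsub : Finset.Iic j ⊆ s := by
      intro k hk
      rw [Finset.mem_Iic] at hk
      rw [hs, Finset.mem_filter]
      exact ⟨Finset.mem_univ k, hlower k j hk hj⟩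
    have h2 := Finset.card_le_card hsub
    rw [Fin.card_Iic] at h2
    omega
  -- orthonormal family indexed by Fin m, extend to basis
  set t : Set (Fin m) := {i | ∃ h : (i : ℕ) < n, lam ⟨(i : ℕ), h⟩ ≠ 0} with ht
  set v : Fin m → EuclideanSpace 𝕜 (Fin m) :=
    fun i => if h : (i : ℕ) < n then p ⟨(i : ℕ), h⟩ else 0 with hv
  have hvon : Orthonormal 𝕜 (t.restrict v) := by
    rw [orthonormal_iff_ite]
    rintro ⟨x, hx⟩ ⟨y, hy⟩
    rw [ht] at hx hy
    obtain ⟨hxn, hx0⟩ := hx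
    obtain ⟨hyn, hy0⟩ := hy
    simp only [Set.restrict_apply, Set.restrict, hv, dif_pos hxn, dif_pos hyn]
    rw [hpinner _ _ hx0 hy0]
    by_cases h : x = y
    · subst h; simp
    · rw [if_neg (fun hc : (⟨(x:ℕ), hxn⟩ : Fin n) = ⟨(y:ℕ), hyn⟩ => h (Fin.ext (by
        have := congrArg Fin.val hc; simpa using this))),
        if_neg (fun hc => h (congrArg Subtype.val hc))]
  obtain ⟨b, hb⟩ := hvon.exists_orthonormalBasis_extension_of_card_eq
    (by simp [finrank_euclideanSpace_fin])
  set P : Matrix (Fin m) (Fin m) 𝕜 := Matrix.of fun a i => b i a with hP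
  have hPu : Pᴴ * P = 1 := by
    ext i j
    rw [Matrix.mul_apply, Matrix.one_apply]
    have h := orthonormal_iff_ite.mp b.orthonormal i j
    rw [PiLp.inner_apply] at h
    simp only [RCLike.inner_apply] at h
    rw [← h]
    simp [hP, Matrix.conjTranspose_apply]
    exact Finset.sum_congr rfl fun x _ => mul_comm _ _
  set D : Matrix (Fin m) (Fin n) 𝕜 := Matrix.of fun a c =>
    if (a : ℕ) = (c : ℕ) then (RCLike.ofReal (Real.sqrt (lam c)) : 𝕜) else 0 with hD
  have hPD : P * D = N := by
    ext a j
    rw [Matrix.mul_apply]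
    by_cases hjm : (j : ℕ) < m
    · set i₀ : Fin m := ⟨(j : ℕ), hjm⟩ with hi₀
      have hsum : (∑ i, P a i * D i j) = P a i₀ * D i₀ j := by
        apply Finset.sum_eq_single i₀
        · intro i _ hi
          have : (i : ℕ) ≠ (j : ℕ) := fun hc => hi (Fin.ext (by rw [hi₀]; exact hc))
          simp [hD, this]
        · intro h; exact absurd (Finset.mem_univ i₀) h
      rw [hsum]
      by_cases hl : lam j = 0
      · rw [hcolzero j hl a]
        simp [hD, hl]
      · have hti₀ : i₀ ∈ t := by
          rw [ht]
          refine ⟨by simpa [hi₀] using j.isLt, ?_⟩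
          have : (⟨((i₀ : Fin m) : ℕ), by simpa [hi₀] using j.isLt⟩ : Fin n) = j := Fin.ext (by simp [hi₀])
          rw [this]; exact hl
        have hbv := hb i₀ hti₀
        have hvp : v i₀ = p j := by
          have hlt : ((i₀ : Fin m) : ℕ) < n := by simpa [hi₀] using j.isLt
          simp only [hv, dif_pos hlt]
          exact congrArg p (Fin.ext rfl)
        have hDij : D i₀ j = (RCLike.ofReal (Real.sqrt (lam j)) : 𝕜) := by
          simp [hD, hi₀]
        rw [hDij]
        have hPa : P a i₀ = p j a := by rw [hP]; simp only [Matrix.of_apply]; rw [hbv, hvp]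
        rw [hPa, hp]
        have hsq : Real.sqrt (lam j) ≠ 0 := by
          intro h0
          exact hl (by rw [← Real.mul_self_sqrt (hlamnn j), h0, mul_zero])
        simp only [PiLp.smul_apply, smul_eq_mul, hcolv]
        rw [mul_comm, ← mul_assoc, ← RCLike.ofReal_mul]
        rw [mul_inv_cancel₀ hsq]
        simp
    · have hl : lam j = 0 := by
        by_contra hl
        exact hjm (hcard j hl)
      rw [hcolzero j hl a]
      apply Finset.sum_eq_zero
      intro i _
      have : (i : ℕ) ≠ (j : ℕ) := by omega
      simp [hD, this]
  refine ⟨P, D, Q, hPu, hQu, ?_, ?_⟩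
  · intro a c hac
    simp [hD, hac]
  · rw [hPD, hN, Matrix.mul_assoc, hQu', Matrix.mul_one]


lemma conj_map_unitary {k : ℕ} (X : Matrix (Fin k) (Fin k) ℂ) (h : Xᴴ * X = 1) :
    (X.map (starRingEnd ℂ))ᴴ * X.map (starRingEnd ℂ) = 1 := by
  have hst : ∀ a : ℂ, (starRingEnd ℂ) (star a) = star ((starRingEnd ℂ) a) := fun a => rfl
  rw [← Matrix.conjTranspose_map _ hst, ← Matrix.map_mul, h,
    Matrix.map_one _ (map_zero _) (map_one _)]

lemma ofReal_map_unitary {k : ℕ} (X : Matrix (Fin k) (Fin k) ℝ) (h : Xᴴ * X = 1) :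
    (X.map (Complex.ofRealHom : ℝ →+* ℂ))ᴴ * X.map (Complex.ofRealHom : ℝ →+* ℂ) = 1 := by
  have hst : ∀ a : ℝ, (Complex.ofRealHom : ℝ →+* ℂ) (star a) = star ((Complex.ofRealHom : ℝ →+* ℂ) a) := by
    intro a
    simp [Complex.conj_ofReal]
  rw [← Matrix.conjTranspose_map _ hst, ← Matrix.map_mul, h,
    Matrix.map_one _ (map_zero _) (map_one _)]

lemma map_conj_conj {a b : ℕ} (X : Matrix (Fin a) (Fin b) ℂ) :
    (X.map (starRingEnd ℂ)).map (starRingEnd ℂ) = X := by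
  ext i j
  simp [Matrix.map_apply]

lemma map_ofReal_conj {a b : ℕ} (X : Matrix (Fin a) (Fin b) ℝ) :
    (X.map (Complex.ofRealHom : ℝ →+* ℂ)).map (starRingEnd ℂ)
      = X.map (Complex.ofRealHom : ℝ →+* ℂ) := by
  ext i j
  simp [Matrix.map_apply, Complex.conj_ofReal]

/-- existence of the t-SVD. -/
theorem tsvd_exists (n1 n2 n3 : ℕ) (A : Fin n3 → Matrix (Fin n1) (Fin n2) ℝ) :
    ∃ (U : Fin n3 → Matrix (Fin n1) (Fin n1) ℝ)
      (S : Fin n3 → Matrix (Fin n1) (Fin n2) ℝ)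
      (V : Fin n3 → Matrix (Fin n2) (Fin n2) ℝ),
      tProd (ctrans U) U = idT n1 n3 ∧
      tProd (ctrans V) V = idT n2 n3 ∧
      (∀ (i : Fin n3) (a : Fin n1) (b : Fin n2), (a : ℕ) ≠ (b : ℕ) → S i a b = 0) ∧
      A = tProd U (tProd S (ctrans V)) := by
  classical
  rcases Nat.eq_zero_or_pos n3 with h0 | hpos
  · subst h0
    exact ⟨fun i => i.elim0, fun i => i.elim0, fun i => i.elim0,
      funext fun i => i.elim0, funext fun i => i.elim0, fun i => i.elim0,
      funext fun i => i.elim0⟩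
  haveI : NeZero n3 := ⟨hpos.ne'⟩
  have hsymmA : ∀ i : Fin n3, fourier3 A (-i) = (fourier3 A i).map (starRingEnd ℂ) :=
    fun i => fourier3_neg A i
  set Tup := (Matrix (Fin n1) (Fin n1) ℂ × Matrix (Fin n1) (Fin n2) ℂ
    × Matrix (Fin n2) (Fin n2) ℂ) with hTup
  set conjT : Tup → Tup := fun T =>
    (T.1.map (starRingEnd ℂ), T.2.1.map (starRingEnd ℂ), T.2.2.map (starRingEnd ℂ)) with hconjT
  set Good : Fin n3 → Tup → Prop := fun i T =>
    T.1ᴴ * T.1 = 1 ∧ T.2.2ᴴ * T.2.2 = 1 ∧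
    (∀ (a : Fin n1) (b : Fin n2), (a : ℕ) ≠ (b : ℕ) → T.2.1 a b = 0) ∧
    fourier3 A i = T.1 * T.2.1 * T.2.2ᴴ with hGoodDef
  have hGoodConj : ∀ (i : Fin n3) (T : Tup), Good i T → Good (-i) (conjT T) := by
    rintro i T ⟨h1, h2, h3, h4⟩
    refine ⟨conj_map_unitary _ h1, conj_map_unitary _ h2, ?_, ?_⟩
    · intro a b hab
      simp only [hconjT, Matrix.map_apply, h3 a b hab, map_zero]
    · have hst : ∀ a : ℂ, (starRingEnd ℂ) (star a) = star ((starRingEnd ℂ) a) := fun a => rfl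
      rw [hsymmA i, h4, Matrix.map_mul, Matrix.map_mul, Matrix.conjTranspose_map _ hst]
  have hbase : ∀ i : Fin n3, ∃ T : Tup, Good i T ∧ (i = -i → conjT T = T) := by
    intro i
    by_cases hi : i = -i
    · set R : Matrix (Fin n1) (Fin n2) ℝ := Matrix.of fun a b => (fourier3 A i a b).re with hR
      have hAR : fourier3 A i = R.map (Complex.ofRealHom : ℝ →+* ℂ) := by
        ext a b
        have h5 := congrFun (congrFun (hsymmA i) a) b
        rw [← hi] at h5
        rw [Matrix.map_apply] at h5
        have h6 : (starRingEnd ℂ) (fourier3 A i a b) = fourier3 A i a b := h5.symm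
        rw [Matrix.map_apply]
        simp only [hR, Matrix.of_apply, Complex.ofRealHom_eq_coe]
        exact (Complex.conj_eq_iff_re.mp h6).symm
      obtain ⟨P0, D0, Q0, hP0, hQ0, hD0, hM0⟩ := svd_exists (𝕜 := ℝ) n1 n2 R
      refine ⟨(P0.map (Complex.ofRealHom : ℝ →+* ℂ), D0.map (Complex.ofRealHom : ℝ →+* ℂ),
        Q0.map (Complex.ofRealHom : ℝ →+* ℂ)), ⟨?_, ?_, ?_, ?_⟩,
        fun _ => ?_⟩
      · exact ofReal_map_unitary P0 hP0
      · exact ofReal_map_unitary Q0 hQ0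
      · intro a b hab
        simp only [Matrix.map_apply, hD0 a b hab, map_zero]
      · have hst : ∀ a : ℝ, (Complex.ofRealHom : ℝ →+* ℂ) (star a)
            = star ((Complex.ofRealHom : ℝ →+* ℂ) a) := by
          intro a; simp [Complex.conj_ofReal]
        rw [hAR, hM0, Matrix.map_mul, Matrix.map_mul, Matrix.conjTranspose_map _ hst]
      · simp only [hconjT]
        exact Prod.ext (map_ofReal_conj P0) (Prod.ext (map_ofReal_conj D0) (map_ofReal_conj Q0))
    · obtain ⟨P0, D0, Q0, hP0, hQ0, hD0, hM0⟩ := svd_exists (𝕜 := ℂ) n1 n2 (fourier3 A i)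
      exact ⟨(P0, D0, Q0), ⟨hP0, hQ0, hD0, hM0⟩, fun h => absurd h hi⟩
  choose base hbaseGood hbaseConj using hbase
  set trip : Fin n3 → Tup := fun i =>
    if ((i : ℕ) ≤ ((-i : Fin n3) : ℕ)) then base i else conjT (base (-i)) with htrip
  have htripGood : ∀ i, Good i (trip i) := by
    intro i
    simp only [htrip]
    split_ifs with h
    · exact hbaseGood i
    · have h2 := hGoodConj (-i) (base (-i)) (hbaseGood (-i))
      rwa [neg_neg] at h2
  have htripSymm : ∀ i, trip (-i) = conjT (trip i) := by
    intro i
    by_cases h1 : (i : ℕ) ≤ ((-i : Fin n3) : ℕ)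
    · by_cases heq : ((-i : Fin n3) : ℕ) ≤ (i : ℕ)
      · have hie : i = -i := Fin.ext (le_antisymm h1 heq)
        have h2 := hbaseConj i hie
        rw [← hie]
        simp only [htrip, if_pos h1]
        exact h2.symm
      · simp only [htrip, neg_neg, if_neg heq, if_pos h1]
    · have h2 : ((-i : Fin n3) : ℕ) ≤ (i : ℕ) := le_of_not_ge h1
      simp only [htrip, neg_neg, if_pos h2, if_neg h1]
      refine (Prod.ext ?_ (Prod.ext ?_ ?_)).symm
      · exact map_conj_conj _
      · exact map_conj_conj _
      · exact map_conj_conj _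
  set Uc : Fin n3 → Matrix (Fin n1) (Fin n1) ℂ := fun i => (trip i).1 with hUc
  set Dc : Fin n3 → Matrix (Fin n1) (Fin n2) ℂ := fun i => (trip i).2.1 with hDc
  set Vc : Fin n3 → Matrix (Fin n2) (Fin n2) ℂ := fun i => (trip i).2.2 with hVc
  have hUsym : ∀ i, Uc (-i) = (Uc i).map (starRingEnd ℂ) :=
    fun i => congrArg Prod.fst (htripSymm i)
  have hDsym : ∀ i, Dc (-i) = (Dc i).map (starRingEnd ℂ) :=
    fun i => congrArg (fun T : Tup => T.2.1) (htripSymm i)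
  have hVsym : ∀ i, Vc (-i) = (Vc i).map (starRingEnd ℂ) :=
    fun i => congrArg (fun T : Tup => T.2.2) (htripSymm i)
  obtain ⟨U, hU, -⟩ := exists_real_inv Uc hUsym
  obtain ⟨S, hS, hS0⟩ := exists_real_inv Dc hDsym
  obtain ⟨V, hV, -⟩ := exists_real_inv Vc hVsym
  refine ⟨U, S, V, ?_, ?_, ?_, ?_⟩
  · apply fourier3_injective
    intro i
    rw [fourier3_tProd, fourier3_ctrans, hU i, fourier3_idT]
    exact (htripGood i).1
  · apply fourier3_injective
    intro i
    rw [fourier3_tProd, fourier3_ctrans, hV i, fourier3_idT]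
    exact (htripGood i).2.1
  · intro i a b hab
    exact hS0 i a b (fun j => (htripGood j).2.2.1 a b hab)
  · apply fourier3_injective
    intro i
    rw [fourier3_tProd, fourier3_tProd, fourier3_ctrans, hU i, hS i, hV i, ← Matrix.mul_assoc]
    exact (htripGood i).2.2.2
end
end

section
/- Let U ∈ ℂ^{n×r} have orthonormal columns (U'U = I_r), let w ∈ ℂ^r be nonzero, p = Uw, and let ρ ∈ ℂ^n be a nonzero vector orthogonal to the column span of U (U'ρ = 0). For any η ∈ ℝ and σ = ‖ρ‖·‖w‖, define U₊ = U + ( sin(ση)·ρ/‖ρ‖ + (cos(ση) − 1)·p/‖p‖ ) · w'/‖w‖. Then U₊ also has orthonormal columns: U₊' U₊ = I_r. -/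
open Matrix BigOperators
noncomputable section

/-- Euclidean norm of a complex vector. -/
def cnorm {n : ℕ} (x : Fin n → ℂ) : ℝ := Real.sqrt (∑ i, Complex.normSq (x i))

lemma cnorm_nonneg {n : ℕ} (x : Fin n → ℂ) : 0 ≤ cnorm x := Real.sqrt_nonneg _

lemma cnorm_pos {n : ℕ} {x : Fin n → ℂ} (hx : x ≠ 0) : 0 < cnorm x := by
  apply Real.sqrt_pos.mpr
  obtain ⟨i, hi⟩ : ∃ i, x i ≠ 0 := by
    by_contra h; push_neg at h; exact hx (funext h)
  exact Finset.sum_pos' (fun j _ => Complex.normSq_nonneg _)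
    ⟨i, Finset.mem_univ i, Complex.normSq_pos.mpr hi⟩

lemma dot_self_eq {n : ℕ} (x : Fin n → ℂ) :
    star x ⬝ᵥ x = (((cnorm x) ^ 2 : ℝ) : ℂ) := by
  have h : (cnorm x) ^ 2 = ∑ i, Complex.normSq (x i) :=
    Real.sq_sqrt (Finset.sum_nonneg fun i _ => Complex.normSq_nonneg _)
  rw [h]
  push_cast
  simp [dotProduct, Complex.normSq_eq_conj_mul_self]

lemma vecMulVec_conjT {m k : ℕ} (v : Fin m → ℂ) (t : Fin k → ℂ) :
    (vecMulVec v t)ᴴ = vecMulVec (star t) (star v) := by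
  ext i j; simp [vecMulVec_apply, conjTranspose_apply, mul_comm]

lemma mul_vecMulVec {m k l : ℕ} (M : Matrix (Fin m) (Fin k) ℂ) (v : Fin k → ℂ) (t : Fin l → ℂ) :
    M * vecMulVec v t = vecMulVec (M.mulVec v) t := by
  ext i j
  simp only [mul_apply, vecMulVec_apply, mulVec, dotProduct, Finset.sum_mul]
  exact Finset.sum_congr rfl fun _ _ => by ring

lemma vecMulVec_mul {m k l : ℕ} (u : Fin m → ℂ) (x : Fin k → ℂ) (M : Matrix (Fin k) (Fin l) ℂ) :
    vecMulVec u x * M = vecMulVec u (x ᵥ* M) := by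
  ext i j
  simp only [mul_apply, vecMulVec_apply, vecMul, dotProduct, Finset.mul_sum]
  exact Finset.sum_congr rfl fun _ _ => by ring

lemma vecMulVec_mul_vecMulVec {m k l : ℕ} (u : Fin m → ℂ) (x : Fin k → ℂ)
    (v : Fin k → ℂ) (t : Fin l → ℂ) :
    vecMulVec u x * vecMulVec v t = (x ⬝ᵥ v) • vecMulVec u t := by
  ext i j
  simp only [mul_apply, vecMulVec_apply, dotProduct, Matrix.smul_apply, smul_eq_mul,
    Finset.sum_mul, Finset.mul_sum]
  exact Finset.sum_congr rfl fun _ _ => by ring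

lemma vecMulVec_smul_left {m k : ℕ} (c : ℂ) (u : Fin m → ℂ) (x : Fin k → ℂ) :
    vecMulVec (c • u) x = c • vecMulVec u x := by
  ext i j; simp [vecMulVec_apply, mul_assoc]

lemma vecMulVec_smul_right {m k : ℕ} (c : ℂ) (u : Fin m → ℂ) (x : Fin k → ℂ) :
    vecMulVec u (c • x) = c • vecMulVec u x := by
  ext i j; simp [vecMulVec_apply]; ring

set_option maxHeartbeats 1600000

/-- the Grassmannian geodesic update preserves orthonormality of columns. -/
theorem geodesic_update_orthonormal (n r : ℕ)
    (U : Matrix (Fin n) (Fin r) ℂ) (hU : Uᴴ * U = 1)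
    (w : Fin r → ℂ) (hw : w ≠ 0)
    (ρ : Fin n → ℂ) (hρ : ρ ≠ 0) (hρU : Uᴴ.mulVec ρ = 0)
    (η : ℝ)
    (p : Fin n → ℂ) (hp : p = U.mulVec w)
    (σ : ℝ) (hσ : σ = cnorm ρ * cnorm w)
    (Up : Matrix (Fin n) (Fin r) ℂ)
    (hUp : Up = Matrix.of fun i j => U i j +
      (((Real.sin (σ * η) : ℝ) : ℂ) * (ρ i / ((cnorm ρ : ℝ) : ℂ)) +
        (((Real.cos (σ * η) - 1 : ℝ)) : ℂ) * (p i / ((cnorm p : ℝ) : ℂ))) *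
        (starRingEnd ℂ (w j) / ((cnorm w : ℝ) : ℂ))) :
    Upᴴ * Up = 1 := by
  -- basic facts
  have hUp2 : Uᴴ.mulVec p = w := by
    rw [hp, mulVec_mulVec, hU, one_mulVec]
  have hρUstar : star ρ ᵥ* U = 0 := by
    have := congrArg star hρU
    rwa [star_mulVec, conjTranspose_conjTranspose, star_zero] at this
  have hρp : star ρ ⬝ᵥ p = 0 := by
    rw [hp, dotProduct_mulVec, hρUstar, zero_dotProduct]
  have hpρ : star p ⬝ᵥ ρ = 0 := by
    have := congrArg star hρp
    rwa [star_dotProduct, star_star, star_zero] at this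
  have hppw : star p ⬝ᵥ p = star w ⬝ᵥ w := by
    rw [hp, dotProduct_mulVec, star_mulVec, vecMul_vecMul, hU, vecMul_one]
  have hpb : cnorm p = cnorm w := by
    have h1 : (cnorm p) ^ 2 = (cnorm w) ^ 2 := by
      have := (dot_self_eq p).symm.trans (hppw.trans (dot_self_eq w))
      exact_mod_cast this
    nlinarith [cnorm_nonneg p, cnorm_nonneg w, cnorm_pos hw]
  -- abstract the real scalars
  obtain ⟨sn, cs, hsc, hsin, hcos⟩ : ∃ sn cs : ℝ, sn ^ 2 + cs ^ 2 = 1 ∧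
      Real.sin (σ * η) = sn ∧ Real.cos (σ * η) = cs :=
    ⟨_, _, Real.sin_sq_add_cos_sq _, rfl, rfl⟩
  obtain ⟨a, haeq, ha⟩ : ∃ a : ℝ, cnorm ρ = a ∧ 0 < a := ⟨_, rfl, cnorm_pos hρ⟩
  obtain ⟨b, hbeq, hb⟩ : ∃ b : ℝ, cnorm w = b ∧ 0 < b := ⟨_, rfl, cnorm_pos hw⟩
  rw [hbeq] at hpb
  rw [hsin, hcos, haeq, hbeq, hpb] at hUp
  have hρρ : star ρ ⬝ᵥ ρ = ((a ^ 2 : ℝ) : ℂ) := by rw [← haeq]; exact dot_self_eq ρ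
  have hpp : star p ⬝ᵥ p = ((b ^ 2 : ℝ) : ℂ) := by
    rw [hppw, ← hbeq]; exact dot_self_eq w
  have hane : ((a : ℝ) : ℂ) ≠ 0 := by exact_mod_cast ha.ne'
  have hbne : ((b : ℝ) : ℂ) ≠ 0 := by exact_mod_cast hb.ne'
  -- the rank-one update
  set α : ℂ := ((sn / a : ℝ) : ℂ) with hα
  set β : ℂ := (((cs - 1) / b : ℝ) : ℂ) with hβ
  set v : Fin n → ℂ := α • ρ + β • p with hv
  set t : Fin r → ℂ := (((b : ℝ) : ℂ))⁻¹ • star w with ht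
  have hUpeq : Up = U + vecMulVec v t := by
    rw [hUp]
    ext i j
    simp only [Matrix.add_apply, Matrix.of_apply, vecMulVec_apply, hv, ht, Pi.add_apply,
      Pi.smul_apply, smul_eq_mul, hα, hβ]
    push_cast
    field_simp
    rfl
  have hUv : Uᴴ.mulVec v = β • w := by
    rw [hv, mulVec_add, mulVec_smul, mulVec_smul, hρU, hUp2, smul_zero, zero_add]
  have hvU : star v ᵥ* U = star (β • w) := by
    rw [← hUv, star_mulVec, conjTranspose_conjTranspose]
  have hvv : star v ⬝ᵥ v = ((sn ^ 2 + (cs - 1) ^ 2 : ℝ) : ℂ) := by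
    rw [hv]
    simp only [star_add, star_smul, add_dotProduct, dotProduct_add, smul_dotProduct,
      dotProduct_smul, hρρ, hpp, hρp, hpρ, smul_zero, smul_eq_mul, mul_zero, add_zero, zero_add,
      hα, hβ, RCLike.star_def, Complex.conj_ofReal]
    push_cast
    field_simp
  -- expand
  rw [hUpeq, conjTranspose_add, vecMulVec_conjT, Matrix.add_mul, Matrix.mul_add,
    Matrix.mul_add, hU, _root_.mul_vecMulVec, hUv, vecMulVec_mul, hvU, vecMulVec_mul_vecMulVec, hvv]
  have hstart : star t = (((b : ℝ) : ℂ))⁻¹ • w := by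
    rw [ht, star_smul, star_star]
    congr 1
    simp [RCLike.star_def, Complex.conj_ofReal]
  have hstarβw : star (β • w) = β • star w := by
    rw [star_smul]
    congr 1
    simp [hβ, RCLike.star_def, Complex.conj_ofReal]
  rw [hstart, hstarβw, vecMulVec_smul_left, vecMulVec_smul_right, vecMulVec_smul_left,
    vecMulVec_smul_right, vecMulVec_smul_left, vecMulVec_smul_right]
  have hkey : β • ((((b:ℝ):ℂ))⁻¹ • vecMulVec w (star w)) +
      ((((b:ℝ):ℂ))⁻¹ • (β • vecMulVec w (star w)) +
        ((sn ^ 2 + (cs - 1) ^ 2 : ℝ) : ℂ) • ((((b:ℝ):ℂ))⁻¹ •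
          ((((b:ℝ):ℂ))⁻¹ • vecMulVec w (star w)))) = 0 := by
    rw [smul_smul, smul_smul, smul_smul, smul_smul, ← add_smul, ← add_smul]
    convert zero_smul ℂ (vecMulVec w (star w))
    rw [hβ]
    have h0 : (cs - 1) / b * b⁻¹ + (b⁻¹ * ((cs - 1) / b) +
        (sn ^ 2 + (cs - 1) ^ 2) * b⁻¹ * b⁻¹) = 0 := by
      have hbne' : b ≠ 0 := hb.ne'
      field_simp
      nlinarith [hsc]
    exact_mod_cast congrArg (Complex.ofReal) h0
  rw [add_assoc, hkey, add_zero]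
end
end
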